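/- Let Γ be a free group of finite rank n > 1, p a prime, and k ≥ 2, and let π : Γ/Γ^S_{k+2} → Γ/Γ^S_{k+1} be the canonical projection. There is no group homomorphism s : Aut(Γ/Γ^S_{k+1}) → Aut(Γ/Γ^S_{k+2}) such that π ∘ s(φ) = φ ∘ π for every automorphism φ of Γ/Γ^S_{k+1}; that is, the extension 0 → Hom(Γ/Γ^S_2, Γ^S_{k+1}/Γ^S_{k+2}) → Aut(Γ/Γ^S_{k+2}) → Aut(Γ/Γ^S_{k+1}) → 1 does not split. -/

import Mathlib

open scoped commutatorElement

def stallings (p : ℕ) (G : Type*) [Group G] : ℕ → Subgroup G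
  | 0 => ⊤
  | 1 => ⊤
  | (k + 2) =>
    Subgroup.closure
      {x : G | (∃ g : G, ∃ y ∈ stallings p G (k + 1), x = ⁅g, y⁆) ∨
        ∃ y ∈ stallings p G (k + 1), x = y ^ p}

theorem closure_normal_of_conj {G : Type*} [Group G] {s : Set G}
    (h : ∀ g : G, ∀ x ∈ s, g * x * g⁻¹ ∈ s) : (Subgroup.closure s).Normal := by
  constructor
  intro n hn g
  have key : Subgroup.closure s ≤
      Subgroup.comap (MulAut.conj g).toMonoidHom (Subgroup.closure s) := by
    rw [Subgroup.closure_le]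
    intro x hx
    have : (MulAut.conj g).toMonoidHom x ∈ Subgroup.closure s :=
      Subgroup.subset_closure (by simpa [MulAut.conj_apply] using h g x hx)
    exact this
  have := key hn
  rw [Subgroup.mem_comap] at this
  simpa [MulAut.conj_apply] using this

instance stallings_normal (p : ℕ) (G : Type*) [Group G] (k : ℕ) :
    (stallings p G k).Normal := by
  induction k with
  | zero => simp only [stallings]; infer_instance
  | succ n ih =>
    cases n with
    | zero => simp only [stallings]; infer_instance
    | succ m =>
      simp only [stallings]
      apply closure_normal_of_conj
      rintro g x (⟨a, y, hy, rfl⟩ | ⟨y, hy, rfl⟩)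
      · refine Or.inl ⟨g * a * g⁻¹, g * y * g⁻¹, ih.conj_mem y hy g, ?_⟩
        simp only [commutatorElement_def]
        group
      · refine Or.inr ⟨g * y * g⁻¹, ih.conj_mem y hy g, ?_⟩
        rw [conj_pow]

theorem stallings_succ_le (p : ℕ) (G : Type*) [Group G] :
    ∀ k, stallings p G (k + 1) ≤ stallings p G k := by
  intro k
  induction k with
  | zero => exact le_top
  | succ n ih =>
    cases n with
    | zero => exact le_top
    | succ m =>
      show stallings p G (m + 3) ≤ stallings p G (m + 2)
      have h3 : stallings p G (m + 3) = Subgroup.closure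
          {x : G | (∃ g : G, ∃ y ∈ stallings p G (m + 2), x = ⁅g, y⁆) ∨
            ∃ y ∈ stallings p G (m + 2), x = y ^ p} := rfl
      rw [h3, Subgroup.closure_le]
      rintro x (⟨a, y, hy, rfl⟩ | ⟨y, hy, rfl⟩)
      · show ⁅a, y⁆ ∈ stallings p G (m + 2)
        simp only [stallings]
        exact Subgroup.subset_closure (Or.inl ⟨a, y, ih hy, rfl⟩)
      · show y ^ p ∈ stallings p G (m + 2)
        simp only [stallings]
        exact Subgroup.subset_closure (Or.inr ⟨y, ih hy, rfl⟩)

theorem stallings_antitone (p : ℕ) (G : Type*) [Group G] :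
    Antitone (stallings p G) :=
  antitone_nat_of_succ_le (stallings_succ_le p G)

/-- The canonical projection `G/G^S_{k'} → G/G^S_k` for `k ≤ k'`. -/
def stallingsProj (p : ℕ) (G : Type*) [Group G] (k k' : ℕ) (h : k ≤ k') :
    (G ⧸ stallings p G k') →* (G ⧸ stallings p G k) :=
  QuotientGroup.map _ _ (MonoidHom.id G) (fun _ hx => stallings_antitone p G h hx)


theorem stallings_map_le {G H : Type*} [Group G] [Group H] (p : ℕ) (f : G →* H) :
    ∀ j, ∀ x ∈ stallings p G j, f x ∈ stallings p H j := by
  intro j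
  induction j with
  | zero => intro x _; exact Subgroup.mem_top _
  | succ n ih =>
    cases n with
    | zero => intro x _; exact Subgroup.mem_top _
    | succ m =>
      intro x hx
      have h3 : stallings p G (m + 2) = Subgroup.closure
          {x : G | (∃ g : G, ∃ y ∈ stallings p G (m + 1), x = ⁅g, y⁆) ∨
            ∃ y ∈ stallings p G (m + 1), x = y ^ p} := rfl
      rw [h3] at hx
      have key : Subgroup.closure
          {x : G | (∃ g : G, ∃ y ∈ stallings p G (m + 1), x = ⁅g, y⁆) ∨
            ∃ y ∈ stallings p G (m + 1), x = y ^ p} ≤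
          (stallings p H (m + 2)).comap f := by
        rw [Subgroup.closure_le]
        rintro x (⟨a, y, hy, rfl⟩ | ⟨y, hy, rfl⟩)
        · simp only [Subgroup.mem_comap, SetLike.mem_coe, map_commutatorElement]
          exact Subgroup.subset_closure (Or.inl ⟨f a, f y, ih y hy, rfl⟩)
        · simp only [Subgroup.mem_comap, SetLike.mem_coe, map_pow]
          exact Subgroup.subset_closure (Or.inr ⟨f y, ih y hy, rfl⟩)
      exact key hx

theorem pow_p_mem_stallings {G : Type*} [Group G] (p j : ℕ) (x : G)
    (hx : x ∈ stallings p G j) : x ^ p ∈ stallings p G (j + 1) := by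
  cases j with
  | zero => exact Subgroup.mem_top _
  | succ m => exact Subgroup.subset_closure (Or.inr ⟨x, hx, rfl⟩)

theorem pow_pow_mem_stallings {G : Type*} [Group G] (p j : ℕ) (x : G) :
    x ^ (p ^ j) ∈ stallings p G (j + 1) := by
  induction j with
  | zero => exact Subgroup.mem_top _
  | succ m ih =>
    rw [pow_succ, pow_mul]
    exact pow_p_mem_stallings p (m + 1) _ ih

def pPow (r : ℕ) (A : Type*) [AddCommGroup A] : AddSubgroup A where
  carrier := Set.range fun a => r • a
  add_mem' := by rintro _ _ ⟨a, rfl⟩ ⟨b, rfl⟩; exact ⟨a + b, smul_add r a b⟩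
  zero_mem' := ⟨0, smul_zero r⟩
  neg_mem' := by rintro _ ⟨a, rfl⟩; exact ⟨-a, smul_neg r a⟩

theorem stallings_mult_le (p j : ℕ) (A : Type*) [AddCommGroup A] :
    ∀ x ∈ stallings p (Multiplicative A) (j + 1), x.toAdd ∈ pPow (p ^ j) A := by
  induction j with
  | zero => intro x _; exact ⟨x.toAdd, by simp⟩
  | succ m ih =>
    intro x hx
    have key : stallings p (Multiplicative A) (m + 2) ≤
        (pPow (p ^ (m + 1)) A).toSubgroup.comap (MonoidHom.id _) := by
      rw [show stallings p (Multiplicative A) (m + 2) = Subgroup.closure _ from rfl,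
        Subgroup.closure_le]
      rintro x (⟨a, y, hy, rfl⟩ | ⟨y, hy, rfl⟩)
      · have h1 : ⁅a, y⁆ = 1 := commutatorElement_eq_one_iff_commute.mpr (Commute.all a y)
        simp only [Subgroup.mem_comap, MonoidHom.id_apply, h1]
        exact (pPow (p ^ (m + 1)) A).toSubgroup.one_mem
      · obtain ⟨b, hb⟩ := ih y hy
        refine ⟨b, ?_⟩
        show p ^ (m + 1) • b = Multiplicative.toAdd (y ^ p)
        rw [toAdd_pow, ← hb, smul_smul, pow_succ, mul_comm]
    exact key hx

section Main

variable (n p k : ℕ)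

/-- First generator index. -/
def I0 (n : ℕ) (hn : 1 < n) : Fin n := ⟨0, by omega⟩
/-- Second generator index. -/
def I1 (n : ℕ) (hn : 1 < n) : Fin n := ⟨1, hn⟩

theorem I1_ne_I0 (hn : 1 < n) : I1 n hn ≠ I0 n hn := by
  simp [I0, I1, Fin.ext_iff]

/-- The automorphism `x₀ ↦ x₀ x₁^(p^(k-1))` of the free group. -/
def alF (hn : 1 < n) : FreeGroup (Fin n) →* FreeGroup (Fin n) :=
  FreeGroup.lift (fun i => if i = I0 n hn then
    FreeGroup.of (I0 n hn) * (FreeGroup.of (I1 n hn)) ^ (p ^ (k - 1)) else FreeGroup.of i)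

/-- Its inverse `x₀ ↦ x₀ x₁^(-p^(k-1))`. -/
def alFinv (hn : 1 < n) : FreeGroup (Fin n) →* FreeGroup (Fin n) :=
  FreeGroup.lift (fun i => if i = I0 n hn then
    FreeGroup.of (I0 n hn) * (FreeGroup.of (I1 n hn)) ^ (-(p ^ (k - 1) : ℤ)) else FreeGroup.of i)

theorem alF_of0 (hn : 1 < n) : alF n p k hn (FreeGroup.of (I0 n hn)) =
    FreeGroup.of (I0 n hn) * (FreeGroup.of (I1 n hn)) ^ (p ^ (k - 1)) := by
  simp [alF]

theorem alF_of_ne (hn : 1 < n) {i : Fin n} (h : i ≠ I0 n hn) :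
    alF n p k hn (FreeGroup.of i) = FreeGroup.of i := by
  simp [alF, h]

theorem zpow_cancel_neg {G : Type*} [Group G] (x : G) (m : ℕ) :
    x ^ (-(m : ℤ)) * x ^ m = 1 := by
  rw [← zpow_natCast, ← zpow_add, neg_add_cancel, zpow_zero]

theorem zpow_cancel_pos {G : Type*} [Group G] (x : G) (m : ℕ) :
    x ^ m * x ^ (-(m : ℤ)) = 1 := by
  rw [← zpow_natCast, ← zpow_add, add_neg_cancel, zpow_zero]

theorem alFinv_comp_alF (hn : 1 < n) :
    (alFinv n p k hn).comp (alF n p k hn) = MonoidHom.id _ := by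
  apply FreeGroup.ext_hom
  intro i
  by_cases h : i = I0 n hn
  · subst h
    simp only [MonoidHom.comp_apply, MonoidHom.id_apply, alF_of0, map_mul, map_pow]
    rw [alFinv, FreeGroup.lift_apply_of, if_pos rfl, FreeGroup.lift_apply_of, if_neg (I1_ne_I0 n hn)]
    rw [mul_assoc]
    norm_cast
    rw [zpow_cancel_neg, mul_one]
  · simp [alF_of_ne n p k hn h, alFinv, h]

theorem alF_comp_alFinv (hn : 1 < n) :
    (alF n p k hn).comp (alFinv n p k hn) = MonoidHom.id _ := by
  apply FreeGroup.ext_hom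
  intro i
  by_cases h : i = I0 n hn
  · subst h
    simp only [MonoidHom.comp_apply, MonoidHom.id_apply]
    rw [alFinv, FreeGroup.lift_apply_of, if_pos rfl, map_mul, map_zpow, alF_of0,
      alF_of_ne n p k hn (I1_ne_I0 n hn)]
    rw [mul_assoc]
    norm_cast
    rw [zpow_cancel_pos, mul_one]
  · simp [alF_of_ne n p k hn h, alFinv, h]

/-- Package an endomorphism as a `Monoid.End` so that we can take powers. -/
def toEnd {G : Type*} [Monoid G] (f : G →* G) : Monoid.End G := f

theorem toEnd_pow_zero {G : Type*} [Monoid G] (f : G →* G) (x : G) :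
    ((toEnd f) ^ 0) x = x := rfl

theorem toEnd_pow_succ {G : Type*} [Monoid G] (f : G →* G) (m : ℕ) (x : G) :
    ((toEnd f) ^ (m + 1)) x = ((toEnd f) ^ m) (f x) := by
  rw [pow_succ]; rfl

theorem alF_pow_of0 (hn : 1 < n) : ∀ j : ℕ,
    ((toEnd (alF n p k hn)) ^ j) (FreeGroup.of (I0 n hn)) =
      FreeGroup.of (I0 n hn) * (FreeGroup.of (I1 n hn)) ^ (p ^ (k - 1) * j) := by
  have h1 : ∀ m : ℕ, ((toEnd (alF n p k hn)) ^ m) (FreeGroup.of (I1 n hn)) =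
      FreeGroup.of (I1 n hn) := by
    intro m
    induction m with
    | zero => exact toEnd_pow_zero _ _
    | succ l ihl => rw [toEnd_pow_succ, alF_of_ne n p k hn (I1_ne_I0 n hn), ihl]
  intro j
  induction j with
  | zero => rw [toEnd_pow_zero]; simp
  | succ m ih =>
    rw [toEnd_pow_succ, alF_of0, map_mul, map_pow]
    show ((toEnd (alF n p k hn)) ^ m) (FreeGroup.of (I0 n hn)) *
      (((toEnd (alF n p k hn)) ^ m) (FreeGroup.of (I1 n hn))) ^ (p ^ (k - 1)) = _
    rw [ih, h1, mul_assoc, ← pow_add]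
    ring_nf

theorem alF_pow_of_ne (hn : 1 < n) {i : Fin n} (h : i ≠ I0 n hn) : ∀ j : ℕ,
    ((toEnd (alF n p k hn)) ^ j) (FreeGroup.of i) = FreeGroup.of i := by
  intro j
  induction j with
  | zero => exact toEnd_pow_zero _ _
  | succ m ih => rw [toEnd_pow_succ, alF_of_ne n p k hn h, ih]

/-- The induced automorphism of the quotient. -/
def phiAut (hn : 1 < n) :
    MulAut (FreeGroup (Fin n) ⧸ stallings p (FreeGroup (Fin n)) (k + 1)) :=
  MonoidHom.toMulEquiv
    (QuotientGroup.map _ _ (alF n p k hn)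
      (fun x hx => stallings_map_le p (alF n p k hn) (k + 1) x hx))
    (QuotientGroup.map _ _ (alFinv n p k hn)
      (fun x hx => stallings_map_le p (alFinv n p k hn) (k + 1) x hx))
    (by
      apply QuotientGroup.monoidHom_ext
      apply FreeGroup.ext_hom
      intro i
      simp only [MonoidHom.comp_apply, QuotientGroup.map_mk', QuotientGroup.map_mk,
        MonoidHom.id_apply]
      exact congrArg _ (by
        have := DFunLike.congr_fun (alFinv_comp_alF n p k hn) (FreeGroup.of i)
        simpa using this))
    (by
      apply QuotientGroup.monoidHom_ext
      apply FreeGroup.ext_hom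
      intro i
      simp only [MonoidHom.comp_apply, QuotientGroup.map_mk', QuotientGroup.map_mk,
        MonoidHom.id_apply]
      exact congrArg _ (by
        have := DFunLike.congr_fun (alF_comp_alFinv n p k hn) (FreeGroup.of i)
        simpa using this))

theorem phiAut_mk (hn : 1 < n) (g : FreeGroup (Fin n)) :
    phiAut n p k hn (QuotientGroup.mk' _ g) = QuotientGroup.mk' _ (alF n p k hn g) :=
  rfl

theorem phiAut_pow_mk (hn : 1 < n) (j : ℕ) (g : FreeGroup (Fin n)) :
    ((phiAut n p k hn) ^ j) (QuotientGroup.mk' _ g) =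
      QuotientGroup.mk' _ (((toEnd (alF n p k hn)) ^ j) g) := by
  induction j generalizing g with
  | zero => rfl
  | succ m ih =>
    rw [pow_succ, MulAut.mul_apply, toEnd_pow_succ, phiAut_mk, ih]

theorem phiAut_pow_p (hn : 1 < n) (hk : 2 ≤ k) : (phiAut n p k hn) ^ p = 1 := by
  have hmkcomp : (QuotientGroup.mk' (stallings p (FreeGroup (Fin n)) (k + 1))).comp
      ((toEnd (alF n p k hn)) ^ p : Monoid.End _) =
      QuotientGroup.mk' (stallings p (FreeGroup (Fin n)) (k + 1)) := by
    apply FreeGroup.ext_hom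
    intro i
    show QuotientGroup.mk' _ ((((toEnd (alF n p k hn)) ^ p : Monoid.End _) :
      FreeGroup (Fin n) →* FreeGroup (Fin n)) (FreeGroup.of i)) = QuotientGroup.mk' _ (FreeGroup.of i)
    by_cases h : i = I0 n hn
    · subst h
      rw [show (((toEnd (alF n p k hn)) ^ p : Monoid.End _) :
          FreeGroup (Fin n) →* FreeGroup (Fin n)) (FreeGroup.of (I0 n hn)) =
          ((toEnd (alF n p k hn)) ^ p) (FreeGroup.of (I0 n hn)) from rfl,
        alF_pow_of0]
      have hpk : p ^ (k - 1) * p = p ^ k := by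
        rw [← pow_succ, Nat.sub_add_cancel (by omega)]
      rw [hpk, map_mul, map_pow]
      have : QuotientGroup.mk' (stallings p (FreeGroup (Fin n)) (k + 1))
          (FreeGroup.of (I1 n hn)) ^ p ^ k = 1 := by
        rw [← map_pow, QuotientGroup.mk'_apply, QuotientGroup.eq_one_iff]
        exact pow_pow_mem_stallings p k _
      rw [this, mul_one]
    · rw [show (((toEnd (alF n p k hn)) ^ p : Monoid.End _) :
          FreeGroup (Fin n) →* FreeGroup (Fin n)) (FreeGroup.of i) =
          ((toEnd (alF n p k hn)) ^ p) (FreeGroup.of i) from rfl,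
        alF_pow_of_ne n p k hn h]
  apply MulEquiv.ext
  intro x
  obtain ⟨g, rfl⟩ := QuotientGroup.mk'_surjective _ x
  rw [show ((1 : MulAut _)) (QuotientGroup.mk' _ g) = QuotientGroup.mk' _ g from rfl,
    phiAut_pow_mk]
  exact DFunLike.congr_fun hmkcomp g

end Main

section Ab

/-- Abelianization map to `(ZMod q)^n`. -/
def fAb (n q : ℕ) : FreeGroup (Fin n) →* Multiplicative (Fin n → ZMod q) :=
  FreeGroup.lift (fun i => Multiplicative.ofAdd (Pi.single i (1 : ZMod q)))

theorem fAb_of (n q : ℕ) (i : Fin n) :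
    fAb n q (FreeGroup.of i) = Multiplicative.ofAdd (Pi.single i (1 : ZMod q)) := by
  simp [fAb]

theorem sum_single_eq (n q : ℕ) (a : Fin n → ZMod q) :
    ∑ i, a i • (Pi.single i 1 : Fin n → ZMod q) = a := by
  funext j
  rw [Finset.sum_apply]
  simp only [Pi.smul_apply, Pi.single_apply, smul_eq_mul, mul_ite, mul_one, mul_zero]
  rw [Finset.sum_ite_eq Finset.univ j a]
  simp

/-- The induced endomorphism of `(ZMod q)^n` attached to an endomorphism `β` of the
free group. -/
def Bof (n q : ℕ) (β : FreeGroup (Fin n) →* FreeGroup (Fin n)) :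
    Module.End (ZMod q) (Fin n → ZMod q) where
  toFun := fun a => ∑ i, a i • (fAb n q (β (FreeGroup.of i))).toAdd
  map_add' := by
    intro a b
    simp only [Pi.add_apply, add_smul]
    rw [Finset.sum_add_distrib]
  map_smul' := by
    intro c a
    simp only [Pi.smul_apply, smul_eq_mul, mul_smul, RingHom.id_apply]
    rw [Finset.smul_sum]

theorem Bof_single (n q : ℕ) (β : FreeGroup (Fin n) →* FreeGroup (Fin n)) (i : Fin n) :
    Bof n q β (Pi.single i 1 : Fin n → ZMod q) = (fAb n q (β (FreeGroup.of i))).toAdd := by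
  show ∑ j, (Pi.single i 1 : Fin n → ZMod q) j • (fAb n q (β (FreeGroup.of j))).toAdd = _
  simp only [Pi.single_apply, ite_smul, one_smul, zero_smul]
  rw [Finset.sum_ite_eq' Finset.univ i]
  simp

theorem fAb_comp (n q : ℕ) (β : FreeGroup (Fin n) →* FreeGroup (Fin n)) (g : FreeGroup (Fin n)) :
    (fAb n q (β g)).toAdd = Bof n q β ((fAb n q g).toAdd) := by
  have key : (fAb n q).comp β =
      (AddMonoidHom.toMultiplicative (Bof n q β).toAddMonoidHom).comp (fAb n q) := by
    apply FreeGroup.ext_hom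
    intro i
    simp only [MonoidHom.comp_apply, fAb_of]
    show fAb n q (β (FreeGroup.of i)) =
      Multiplicative.ofAdd (Bof n q β ((Multiplicative.ofAdd (Pi.single i 1 : Multiplicative (Fin n → ZMod q))).toAdd))
    rw [toAdd_ofAdd, Bof_single]
    rfl
  have := DFunLike.congr_fun key g
  simp only [MonoidHom.comp_apply] at this
  rw [this]
  rfl

theorem fAb_pow (n q : ℕ) (β : FreeGroup (Fin n) →* FreeGroup (Fin n)) (j : ℕ)
    (g : FreeGroup (Fin n)) :
    (fAb n q ((toEnd β ^ j) g)).toAdd = ((Bof n q β) ^ j) ((fAb n q g).toAdd) := by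
  induction j generalizing g with
  | zero => rfl
  | succ m ih =>
    rw [toEnd_pow_succ, ih, pow_succ, Module.End.mul_apply, fAb_comp]

end Ab

theorem aut_extension_does_not_split (n p : ℕ) (hp : p.Prime) (hn : 1 < n)
    (k : ℕ) (hk : 2 ≤ k) :
    ¬ ∃ s : MulAut (FreeGroup (Fin n) ⧸ stallings p (FreeGroup (Fin n)) (k + 1)) →*
          MulAut (FreeGroup (Fin n) ⧸ stallings p (FreeGroup (Fin n)) (k + 2)),
        ∀ φ x, stallingsProj p (FreeGroup (Fin n)) (k + 1) (k + 2) (Nat.le_succ _) (s φ x) =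
          φ (stallingsProj p (FreeGroup (Fin n)) (k + 1) (k + 2) (Nat.le_succ _) x) := by
  rintro ⟨s, hs⟩
  have hk1 : 1 ≤ k := by omega
  set q := p ^ (k + 1) with hq
  set N2 := stallings p (FreeGroup (Fin n)) (k + 2) with hN2
  set N1 := stallings p (FreeGroup (Fin n)) (k + 1) with hN1
  set mk2 := QuotientGroup.mk' N2 with hmk2
  set mk1 := QuotientGroup.mk' N1 with hmk1
  set ψ := s (phiAut n p k hn) with hψ
  have hψp : ψ ^ p = 1 := by
    rw [hψ, ← map_pow, phiAut_pow_p n p k hn hk, map_one]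
  -- a lift β of ψ to the free group
  set β := FreeGroup.lift
    (fun i => (QuotientGroup.mk'_surjective N2 (ψ (mk2 (FreeGroup.of i)))).choose) with hβdef
  have hβof : ∀ i, mk2 (β (FreeGroup.of i)) = ψ (mk2 (FreeGroup.of i)) := by
    intro i
    rw [hβdef, FreeGroup.lift_apply_of]
    exact (QuotientGroup.mk'_surjective N2 (ψ (mk2 (FreeGroup.of i)))).choose_spec
  have hβ : ∀ g, mk2 (β g) = ψ (mk2 g) := by
    intro g
    have key : mk2.comp β = (MulEquiv.toMonoidHom ψ).comp mk2 :=
      FreeGroup.ext_hom _ _ (fun i => hβof i)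
    exact DFunLike.congr_fun key g
  have hβpow : ∀ j g, mk2 ((toEnd β ^ j) g) = (ψ ^ j) (mk2 g) := by
    intro j
    induction j with
    | zero => intro g; rfl
    | succ m ih =>
      intro g
      rw [toEnd_pow_succ, ih, hβ, pow_succ, MulAut.mul_apply]
  -- β agrees with alF modulo N1
  have hβα : ∀ i, (alF n p k hn (FreeGroup.of i))⁻¹ * β (FreeGroup.of i) ∈ N1 := by
    intro i
    have h1 : mk1 (alF n p k hn (FreeGroup.of i)) = mk1 (β (FreeGroup.of i)) := by
      calc mk1 (alF n p k hn (FreeGroup.of i))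
          = phiAut n p k hn (mk1 (FreeGroup.of i)) := (phiAut_mk n p k hn _).symm
        _ = phiAut n p k hn (stallingsProj p (FreeGroup (Fin n)) (k + 1) (k + 2)
            (Nat.le_succ _) (mk2 (FreeGroup.of i))) := rfl
        _ = stallingsProj p (FreeGroup (Fin n)) (k + 1) (k + 2)
            (Nat.le_succ _) (ψ (mk2 (FreeGroup.of i))) := (hs (phiAut n p k hn) _).symm
        _ = stallingsProj p (FreeGroup (Fin n)) (k + 1) (k + 2)
            (Nat.le_succ _) (mk2 (β (FreeGroup.of i))) := by rw [hβof]
        _ = mk1 (β (FreeGroup.of i)) := rfl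
    exact QuotientGroup.eq.mp h1
  -- the abelianization f := fAb n q, and the vanishing of high powers of p
  haveI : NeZero q := ⟨pow_ne_zero _ hp.pos.ne'⟩
  have hqz : ∀ (j : ℕ), k + 1 ≤ j → ∀ v : Fin n → ZMod q, (p ^ j : ℕ) • v = 0 := by
    intro j hj v
    funext t
    rw [Pi.smul_apply, Pi.zero_apply, nsmul_eq_mul]
    have : ((p ^ j : ℕ) : ZMod q) = 0 := by
      rw [ZMod.natCast_eq_zero_iff, hq]
      exact pow_dvd_pow p hj
    rw [this, zero_mul]
  -- f kills N2
  have hfN2 : ∀ x ∈ N2, fAb n q x = 1 := by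
    intro x hx
    have h1 : fAb n q x ∈ stallings p (Multiplicative (Fin n → ZMod q)) (k + 2) :=
      stallings_map_le p (fAb n q) (k + 2) x hx
    obtain ⟨b, hb⟩ := stallings_mult_le p (k + 1) (Fin n → ZMod q) _ h1
    have h0 : (p ^ (k + 1) : ℕ) • b = (fAb n q x).toAdd := hb
    have : (fAb n q x).toAdd = 0 := by rw [← h0]; exact hqz (k + 1) le_rfl b
    calc fAb n q x = Multiplicative.ofAdd (fAb n q x).toAdd := rfl
      _ = Multiplicative.ofAdd 0 := by rw [this]
      _ = 1 := rfl
  -- the numerical data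
  set B := Bof n q β with hB
  set u := B - 1 with hu
  set e : Fin n → (Fin n → ZMod q) := fun i => (Pi.single i 1 : Fin n → ZMod q) with he
  have hw : ∀ i, ∃ c, (fAb n q ((alF n p k hn (FreeGroup.of i))⁻¹ * β (FreeGroup.of i))).toAdd
      = (p ^ k : ℕ) • c := by
    intro i
    have h1 := stallings_map_le p (fAb n q) (k + 1) _ (hβα i)
    obtain ⟨c, hc⟩ := stallings_mult_le p k (Fin n → ZMod q) _ h1
    exact ⟨c, hc.symm⟩
  -- value of u on basis vectors
  have hfalF : ∀ i, (fAb n q (alF n p k hn (FreeGroup.of i))).toAdd =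
      e i + (if i = I0 n hn then (p ^ (k - 1) : ℕ) • e (I1 n hn) else 0) := by
    intro i
    by_cases h : i = I0 n hn
    · subst h
      rw [alF_of0, map_mul, map_pow, fAb_of, fAb_of, if_pos rfl]
      rw [toAdd_mul, toAdd_pow, toAdd_ofAdd, toAdd_ofAdd]
    · rw [alF_of_ne n p k hn h, fAb_of, if_neg h, toAdd_ofAdd, add_zero]
  have hue : ∀ i, u (e i) =
      (if i = I0 n hn then (p ^ (k - 1) : ℕ) • e (I1 n hn) else 0) +
        (fAb n q ((alF n p k hn (FreeGroup.of i))⁻¹ * β (FreeGroup.of i))).toAdd := by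
    intro i
    have hsplit : β (FreeGroup.of i) =
        alF n p k hn (FreeGroup.of i) *
          ((alF n p k hn (FreeGroup.of i))⁻¹ * β (FreeGroup.of i)) := by group
    have h2 : (fAb n q (β (FreeGroup.of i))).toAdd =
        (fAb n q (alF n p k hn (FreeGroup.of i))).toAdd +
        (fAb n q ((alF n p k hn (FreeGroup.of i))⁻¹ * β (FreeGroup.of i))).toAdd := by
      conv_lhs => rw [hsplit]
      rw [map_mul, toAdd_mul]
    rw [hu, LinearMap.sub_apply, Module.End.one_apply, hB, he, Bof_single, h2, hfalF]
    abel
  -- u (e i) is divisible by p^(k-1)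
  have hdiv : ∀ i, ∃ t, u (e i) = (p ^ (k - 1) : ℕ) • t := by
    intro i
    obtain ⟨c, hc⟩ := hw i
    by_cases h : i = I0 n hn
    · refine ⟨e (I1 n hn) + p • c, ?_⟩
      rw [hue, if_pos h, hc, smul_add]
      congr 1
      rw [smul_smul, ← pow_succ, Nat.sub_add_cancel hk1]
    · refine ⟨p • c, ?_⟩
      rw [hue, if_neg h, hc, zero_add, smul_smul, ← pow_succ, Nat.sub_add_cancel hk1]
  -- every u-value is divisible by p^(k-1)
  have hulin : ∀ a : Fin n → ZMod q, u a = ∑ i, a i • u (e i) := by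
    intro a
    conv_lhs => rw [← sum_single_eq n q a]
    rw [map_sum]
    congr 1
    funext i
    rw [map_smul]
  obtain ⟨td, htd⟩ := Classical.axiomOfChoice hdiv
  have husmall : ∀ a, ∃ t, u a = (p ^ (k - 1) : ℕ) • t := by
    intro a
    refine ⟨∑ i, a i • td i, ?_⟩
    rw [hulin, Finset.smul_sum]
    refine Finset.sum_congr rfl fun i _ => ?_
    rw [htd i]
    exact smul_comm _ _ _
  -- u ∘ u = 0
  have huu : u * u = 0 := by
    apply LinearMap.ext
    intro a
    have huei : ∀ i, u (u (e i)) = 0 := by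
      intro i
      obtain ⟨c, hc⟩ := hw i
      rw [hue, map_add]
      have h1 : u (if i = I0 n hn then (p ^ (k - 1) : ℕ) • e (I1 n hn) else 0) = 0 := by
        by_cases h : i = I0 n hn
        · rw [if_pos h, map_nsmul]
          rw [hue (I1 n hn), if_neg (I1_ne_I0 n hn), zero_add]
          obtain ⟨c1, hc1⟩ := hw (I1 n hn)
          rw [hc1, smul_smul, ← pow_add]
          exact hqz _ (by omega) c1
        · rw [if_neg h, map_zero]
      have h2 : u ((fAb n q ((alF n p k hn (FreeGroup.of i))⁻¹ *
          β (FreeGroup.of i))).toAdd) = 0 := by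
        rw [hc, map_nsmul]
        obtain ⟨t, ht⟩ := husmall c
        rw [ht, smul_smul, ← pow_add]
        exact hqz _ (by omega) t
      rw [h1, h2, add_zero]
    rw [Module.End.mul_apply, LinearMap.zero_apply, hulin a, map_sum]
    have : ∀ i ∈ Finset.univ, u (a i • u (e i)) = 0 := by
      intro i _
      rw [map_smul, huei, smul_zero]
    rw [Finset.sum_congr rfl this, Finset.sum_const_zero]
  -- B ^ j = 1 + j • u
  have hBpowj : ∀ j : ℕ, B ^ j = 1 + j • u := by
    intro j
    induction j with
    | zero => simp
    | succ m ih =>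
      have hBeq : B = 1 + u := by rw [hu]; abel
      rw [pow_succ, ih, hBeq, add_mul, one_mul, mul_add, mul_one, smul_mul_assoc, huu,
        smul_zero, add_zero, succ_nsmul]
      abel
  -- final computation
  have hBp0 : (B ^ p) (e (I0 n hn)) = e (I0 n hn) + (p ^ k : ℕ) • e (I1 n hn) := by
    obtain ⟨c, hc⟩ := hw (I0 n hn)
    rw [hBpowj p, LinearMap.add_apply, Module.End.one_apply, LinearMap.smul_apply,
      hue, if_pos rfl, hc, smul_add, smul_smul, smul_smul, ← pow_succ',
      Nat.sub_add_cancel hk1, ← pow_succ']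
    rw [hqz (k + 1) le_rfl c, add_zero]
  -- but also B^p fixes e (I0)
  have hfix : mk2 ((toEnd β ^ p) (FreeGroup.of (I0 n hn))) = mk2 (FreeGroup.of (I0 n hn)) := by
    rw [hβpow p, hψp]
    rfl
  have hmem : ((toEnd β ^ p) (FreeGroup.of (I0 n hn)))⁻¹ * FreeGroup.of (I0 n hn) ∈ N2 :=
    QuotientGroup.eq.mp hfix
  have hfeq : (fAb n q ((toEnd β ^ p) (FreeGroup.of (I0 n hn)))) =
      fAb n q (FreeGroup.of (I0 n hn)) := by
    have h1 := hfN2 _ hmem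
    rw [map_mul, map_inv] at h1
    have := inv_mul_eq_one.mp h1
    exact this
  have hcontra : e (I0 n hn) = e (I0 n hn) + (p ^ k : ℕ) • e (I1 n hn) := by
    calc e (I0 n hn) = (fAb n q (FreeGroup.of (I0 n hn))).toAdd := by
          rw [fAb_of, toAdd_ofAdd, he]
      _ = (fAb n q ((toEnd β ^ p) (FreeGroup.of (I0 n hn)))).toAdd := by rw [hfeq]
      _ = (B ^ p) ((fAb n q (FreeGroup.of (I0 n hn))).toAdd) := by rw [hB, fAb_pow]
      _ = (B ^ p) (e (I0 n hn)) := by rw [fAb_of, toAdd_ofAdd, he]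
      _ = e (I0 n hn) + (p ^ k : ℕ) • e (I1 n hn) := hBp0
  have hzero : (p ^ k : ℕ) • e (I1 n hn) = 0 := by
    have := hcontra.symm
    rwa [add_eq_left] at this
  have hone : ((p ^ k : ℕ) : ZMod q) = 0 := by
    have h2 : (p ^ k : ℕ) • (1 : ZMod q) = 0 := by
      simpa [he, Pi.single_eq_same] using congrFun hzero (I1 n hn)
    rwa [nsmul_eq_mul, mul_one] at h2
  rw [ZMod.natCast_eq_zero_iff, hq] at hone
  have h2 : p ^ (k + 1) ≤ p ^ k := Nat.le_of_dvd (pow_pos hp.pos k) hone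
  have h3 : p ^ k < p ^ (k + 1) := Nat.pow_lt_pow_succ hp.one_lt
  omega
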